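/- (Main theorem, deterministic core) Let H : {±1}^N → ℝ be even, and suppose there exist σ* ∈ {±1}^N, ρ ∈ (0,1/2), and Δ > 0 such that every σ at Hamming distance exactly ⌊ρN/2⌋ from σ* satisfies H(σ*) - H(σ) ≥ Δ. If βΔ ≥ (log 2 + c)N for some c > 0, then the Glauber dynamics for μ_β(σ) ∝ e^{βH(σ)} has relaxation time at least e^{cN}/2, and hence mixing time at least (e^{cN}/2 − 1)·log 2... in particular t_mix grows exponentially in N. -/

import Mathlib

/-- The Gibbs measure `μ_β(σ) = e^{βH(σ)} / Z`. -/
noncomputable def gibbs {N : ℕ} (β : ℝ) (H : (Fin N → Bool) → ℝ)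
    (σ : Fin N → Bool) : ℝ :=
  Real.exp (β * H σ) / ∑ τ : Fin N → Bool, Real.exp (β * H τ)

/-- Flip the `i`-th spin. -/
def bflip {N : ℕ} (σ : Fin N → Bool) (i : Fin N) : Fin N → Bool :=
  Function.update σ i (!σ i)

/-- Hamming distance on the cube. -/
def hammingDist' {N : ℕ} (σ τ : Fin N → Bool) : ℕ :=
  (Finset.univ.filter (fun i => σ i ≠ τ i)).card

open Classical in
/-- Transition kernel of single-site Glauber dynamics for `μ`. -/
noncomputable def glauberP {N : ℕ} (μ : (Fin N → Bool) → ℝ) :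
    (Fin N → Bool) → (Fin N → Bool) → ℝ := fun σ τ =>
  if σ = τ then 1 - ∑ i : Fin N, (1 / N) * (μ (bflip σ i) / (μ σ + μ (bflip σ i)))
  else if ∃ i, τ = bflip σ i then (1 / N) * (μ τ / (μ σ + μ τ))
  else 0

/-- Dirichlet form. -/
noncomputable def dirichletForm {α : Type*} [Fintype α] (π : α → ℝ)
    (P : α → α → ℝ) (f : α → ℝ) : ℝ :=
  (1/2) * ∑ x, ∑ y, π x * P x y * (f x - f y) ^ 2

/-- Variance under `π`. -/
noncomputable def varPi {α : Type*} [Fintype α] (π : α → ℝ) (f : α → ℝ) : ℝ :=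
  ∑ x, π x * (f x - ∑ y, π y * f y) ^ 2

/-- Spectral gap via the variational characterization. -/
noncomputable def spectralGap {α : Type*} [Fintype α] (π : α → ℝ)
    (P : α → α → ℝ) : ℝ :=
  sInf {r : ℝ | ∃ f : α → ℝ, varPi π f ≠ 0 ∧ r = dirichletForm π P f / varPi π f}

open Classical in
/-- `t`-step transition kernel. -/
noncomputable def kernelPow {α : Type*} [Fintype α] (P : α → α → ℝ) :
    ℕ → α → α → ℝ
  | 0 => fun x y => if x = y then 1 else 0
  | (t + 1) => fun x y => ∑ z, kernelPow P t x z * P z y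

/-- Mixing time: first time total-variation distance from stationarity is `≤ 1/4`
from every initial state. -/
noncomputable def mixingTime {α : Type*} [Fintype α] (π : α → ℝ)
    (P : α → α → ℝ) : ℕ :=
  sInf {t : ℕ | ∀ x, (1/2) * ∑ y, |kernelPow P t x y - π y| ≤ 1/4}

section Abstract
variable {α : Type*} [Fintype α] (π P : α → α → ℝ)

open Finset

-- rows of kernelPow sum to 1
lemma kernelPow_row_sum {α : Type*} [Fintype α] [Nonempty α] (P : α → α → ℝ)
    (hrow : ∀ x, ∑ y, P x y = 1) (t : ℕ) (x : α) : ∑ y, kernelPow P t x y = 1 := by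
  classical
  induction t generalizing x with
  | zero => simp [kernelPow, Finset.sum_ite_eq]
  | succ t ih =>
    simp only [kernelPow]
    rw [Finset.sum_comm]
    calc ∑ z, ∑ y, kernelPow P t x z * P z y
        = ∑ z, kernelPow P t x z * ∑ y, P z y := by
          simp [Finset.mul_sum]
      _ = 1 := by simp [hrow, ih]

lemma kernelPow_nonneg {α : Type*} [Fintype α] (P : α → α → ℝ)
    (hP0 : ∀ x y, 0 ≤ P x y) (t : ℕ) (x y : α) : 0 ≤ kernelPow P t x y := by
  induction t generalizing x y with
  | zero => simp only [kernelPow]; positivity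
  | succ t ih =>
    simp only [kernelPow]
    exact Finset.sum_nonneg fun z _ => mul_nonneg (ih x z) (hP0 z y)

lemma kernelPow_add {α : Type*} [Fintype α] (P : α → α → ℝ) (s t : ℕ) (x y : α) :
    kernelPow P (s + t) x y = ∑ z, kernelPow P s x z * kernelPow P t z y := by
  classical
  induction t generalizing y with
  | zero =>
    simp [kernelPow, Finset.sum_ite_eq']
  | succ t ih =>
    show kernelPow P (s + t + 1) x y = _
    simp only [kernelPow]
    calc ∑ z, kernelPow P (s + t) x z * P z y
        = ∑ z, (∑ w, kernelPow P s x w * kernelPow P t w z) * P z y := by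
          simp_rw [ih]
      _ = ∑ w, kernelPow P s x w * ∑ z, kernelPow P t w z * P z y := by
          simp_rw [Finset.sum_mul, Finset.mul_sum, mul_assoc]
          rw [Finset.sum_comm]

-- stationarity of π under kernelPow
lemma kernelPow_stationary {α : Type*} [Fintype α] (π : α → ℝ) (P : α → α → ℝ)
    (hrow : ∀ x, ∑ y, P x y = 1)
    (hrev : ∀ x y, π x * P x y = π y * P y x) (t : ℕ) (y : α) :
    ∑ x, π x * kernelPow P t x y = π y := by
  classical
  induction t generalizing y with
  | zero =>
    simp [kernelPow, Finset.sum_ite_eq']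
  | succ t ih =>
    simp only [kernelPow]
    calc ∑ x, π x * ∑ z, kernelPow P t x z * P z y
        = ∑ z, (∑ x, π x * kernelPow P t x z) * P z y := by
          simp_rw [Finset.mul_sum, Finset.sum_mul, mul_assoc]
          rw [Finset.sum_comm]
      _ = ∑ z, π z * P z y := by simp_rw [ih]
      _ = ∑ z, π y * P y z := by simp_rw [hrev]
      _ = π y := by rw [← Finset.mul_sum, hrow, mul_one]

end Abstract
lemma dirichlet_eq {α : Type*} [Fintype α] (π : α → ℝ) (P : α → α → ℝ)
    (hrow : ∀ x, ∑ y, P x y = 1)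
    (hrev : ∀ x y, π x * P x y = π y * P y x) (f : α → ℝ) :
    dirichletForm π P f
      = ∑ x, π x * f x ^ 2 - ∑ x, ∑ y, π x * P x y * (f x * f y) := by
  have key : ∀ g : α → ℝ, ∑ x, ∑ y, π x * P x y * g y ^ 2 = ∑ x, π x * g x ^ 2 := by
    intro g
    calc ∑ x, ∑ y, π x * P x y * g y ^ 2
        = ∑ y, ∑ x, π y * P y x * g y ^ 2 := by
          rw [Finset.sum_comm]
          exact Finset.sum_congr rfl fun y _ => Finset.sum_congr rfl fun x _ => by
            rw [hrev]
      _ = ∑ y, π y * g y ^ 2 := by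
          refine Finset.sum_congr rfl fun y _ => ?_
          rw [← Finset.sum_mul, ← Finset.mul_sum, hrow, mul_one]
  have expand : ∀ x y : α, π x * P x y * (f x - f y) ^ 2
      = π x * P x y * f x ^ 2 + π x * P x y * f y ^ 2 - 2 * (π x * P x y * (f x * f y)) := by
    intro x y; ring
  unfold dirichletForm
  simp_rw [expand, Finset.sum_sub_distrib, Finset.sum_add_distrib]
  have h1 : ∀ x, ∑ y, π x * P x y * f x ^ 2 = π x * f x ^ 2 := fun x => by
    rw [← Finset.sum_mul, ← Finset.mul_sum, hrow, mul_one]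
  simp_rw [h1, key f]
  have h2 : ∑ x, ∑ y, 2 * (π x * P x y * (f x * f y))
      = 2 * ∑ x, ∑ y, π x * P x y * (f x * f y) := by
    simp_rw [← Finset.mul_sum]
  rw [h2]
  ring

-- Doeblin contraction
lemma doeblin_step {α : Type*} [Fintype α] (M : α → α → ℝ) (δ : ℝ)
    (hδ : ∀ x y, δ ≤ M x y) (hrow : ∀ x, ∑ y, M x y = 1)
    (ν π : α → ℝ) (hzero : ∑ x, (ν x - π x) = 0) :
    ∑ y, |∑ x, (ν x - π x) * M x y|
      ≤ (1 - (Fintype.card α : ℝ) * δ) * ∑ x, |ν x - π x| := by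
  have hMδ : ∀ x y, 0 ≤ M x y - δ := fun x y => sub_nonneg.2 (hδ x y)
  have key : ∀ y, ∑ x, (ν x - π x) * M x y = ∑ x, (ν x - π x) * (M x y - δ) := by
    intro y
    simp_rw [mul_sub]
    rw [Finset.sum_sub_distrib, ← Finset.sum_mul, hzero, zero_mul, sub_zero]
  calc ∑ y, |∑ x, (ν x - π x) * M x y|
      ≤ ∑ y, ∑ x, |ν x - π x| * (M x y - δ) := by
        refine Finset.sum_le_sum fun y _ => ?_
        rw [key y]
        refine (Finset.abs_sum_le_sum_abs _ _).trans ?_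
        refine Finset.sum_le_sum fun x _ => ?_
        rw [abs_mul, abs_of_nonneg (hMδ x y)]
    _ = ∑ x, |ν x - π x| * ∑ y, (M x y - δ) := by
        rw [Finset.sum_comm]; simp_rw [Finset.mul_sum]
    _ = (1 - (Fintype.card α : ℝ) * δ) * ∑ x, |ν x - π x| := by
        have : ∀ x, ∑ y : α, (M x y - δ) = 1 - (Fintype.card α : ℝ) * δ := by
          intro x
          rw [Finset.sum_sub_distrib, hrow]
          simp [Finset.card_univ, mul_comm]
        simp_rw [this]
        rw [← Finset.sum_mul, mul_comm]

lemma mixing_set_nonempty {α : Type*} [Fintype α] [Nonempty α] (π : α → ℝ) (P : α → α → ℝ)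
    (hP0 : ∀ x y, 0 ≤ P x y) (hrow : ∀ x, ∑ y, P x y = 1)
    (hrev : ∀ x y, π x * P x y = π y * P y x)
    (hπ0 : ∀ x, 0 ≤ π x) (hπ1 : ∑ x, π x = 1)
    (M : ℕ) (hM : ∀ x y, 0 < kernelPow P M x y) :
    {t : ℕ | ∀ x, (1/2) * ∑ y, |kernelPow P t x y - π y| ≤ 1/4}.Nonempty := by
  classical
  set K := (Fintype.card α : ℝ)
  obtain ⟨δ, hδpos, hδ⟩ : ∃ δ : ℝ, 0 < δ ∧ ∀ x y, δ ≤ kernelPow P M x y := by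
    obtain ⟨⟨x₀, y₀⟩, -, hmin⟩ := Finset.exists_min_image (Finset.univ : Finset (α × α))
      (fun p => kernelPow P M p.1 p.2) ⟨⟨Classical.arbitrary α, Classical.arbitrary α⟩, Finset.mem_univ _⟩
    exact ⟨_, hM x₀ y₀, fun x y => hmin ⟨x, y⟩ (Finset.mem_univ _)⟩
  have hKδ : 0 < K * δ := by
    have : (0:ℝ) < K := by positivity
    positivity
  have hKδ1 : K * δ ≤ 1 := by
    have := kernelPow_row_sum P hrow M (Classical.arbitrary α)
    calc K * δ = ∑ _y : α, δ := by simp [K, Finset.card_univ, mul_comm]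
    _ ≤ ∑ y, kernelPow P M (Classical.arbitrary α) y := Finset.sum_le_sum fun y _ => hδ _ y
    _ = 1 := this
  -- iterate
  have iter : ∀ s : ℕ, ∀ x, ∑ y, |kernelPow P (s * M) x y - π y| ≤ 2 * (1 - K * δ) ^ s := by
    intro s
    induction s with
    | zero =>
      intro x
      simp only [Nat.zero_mul, pow_zero, mul_one, kernelPow]
      calc ∑ y, |(if x = y then (1:ℝ) else 0) - π y|
          ≤ ∑ y, (|if x = y then (1:ℝ) else 0| + |π y|) :=
            Finset.sum_le_sum fun y _ => abs_sub _ _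
        _ = ∑ y, |if x = y then (1:ℝ) else 0| + ∑ y, |π y| := Finset.sum_add_distrib
        _ ≤ 2 := by
          have h1 : ∑ y, |if x = y then (1:ℝ) else 0| = 1 := by
            simp [apply_ite abs, Finset.sum_ite_eq]
          have h2 : ∑ y, |π y| ≤ 1 := by
            rw [show ∑ y, |π y| = ∑ y, π y from
              Finset.sum_congr rfl fun y _ => abs_of_nonneg (hπ0 y), hπ1]
          linarith
    | succ s ih =>
      intro x
      have hsplit : ∀ y, kernelPow P ((s+1) * M) x y
          = ∑ z, kernelPow P (s * M) x z * kernelPow P M z y := by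
        intro y
        rw [show (s+1) * M = s * M + M by ring, kernelPow_add]
      have hstat : ∀ y, π y = ∑ z, π z * kernelPow P M z y :=
        fun y => (kernelPow_stationary π P hrow hrev M y).symm
      have := doeblin_step (kernelPow P M) δ hδ (kernelPow_row_sum P hrow M)
        (fun z => kernelPow P (s * M) x z) π ?_
      · calc ∑ y, |kernelPow P ((s+1) * M) x y - π y|
            = ∑ y, |∑ z, (kernelPow P (s * M) x z - π z) * kernelPow P M z y| := by
              refine Finset.sum_congr rfl fun y _ => ?_
              rw [hsplit y, hstat y]
              congr 1
              rw [← Finset.sum_sub_distrib]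
              exact Finset.sum_congr rfl fun z _ => by ring
          _ ≤ (1 - K * δ) * ∑ z, |kernelPow P (s * M) x z - π z| := this
          _ ≤ (1 - K * δ) * (2 * (1 - K * δ) ^ s) := by
              refine mul_le_mul_of_nonneg_left (ih x) ?_
              linarith
          _ = 2 * (1 - K * δ) ^ (s + 1) := by ring
      · rw [Finset.sum_sub_distrib, kernelPow_row_sum P hrow _ x, hπ1, sub_self]
  -- choose s with 2 * (1 - Kδ)^s ≤ 1/2
  obtain ⟨s, hs⟩ : ∃ s : ℕ, (1 - K * δ) ^ s ≤ 1/4 := by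
    obtain ⟨s, hs⟩ := exists_pow_lt_of_lt_one (by norm_num : (0:ℝ) < 1/4)
      (by linarith : 1 - K * δ < 1)
    exact ⟨s, le_of_lt hs⟩
  refine ⟨s * M, fun x => ?_⟩
  have := iter s x
  nlinarith [this, hs]
open RealInnerProductSpace in
lemma euclid_inner_eq {α : Type*} [Fintype α] (u v : EuclideanSpace ℝ α) :
    ⟪u, v⟫ = ∑ x, u x * v x := by
  simp [PiLp.inner_apply, RCLike.inner_apply, conj_trivial]
  exact Finset.sum_congr rfl fun _ _ => mul_comm _ _

set_option maxHeartbeats 1000000 in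
open RealInnerProductSpace in
lemma eigen_lb {α : Type*} [Fintype α] [DecidableEq α] [Nonempty α] (π : α → ℝ)
    (P : α → α → ℝ)
    (hπ : ∀ x, 0 < π x) (hπ1 : ∑ x, π x = 1)
    (hP0 : ∀ x y, 0 ≤ P x y) (hrow : ∀ x, ∑ y, P x y = 1)
    (hrev : ∀ x y, π x * P x y = π y * P y x)
    (hconn : ∀ g : α → ℝ, (∀ x y, P x y ≠ 0 → g x = g y) → ∀ x y, g x = g y)
    (ε : ℝ) (hε : 0 < ε) (hε1 : ε < 1)
    (f₀ : α → ℝ) (hmean : ∑ x, π x * f₀ x = 0) (hvar : 0 < ∑ x, π x * f₀ x ^ 2)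
    (hdir : dirichletForm π P f₀ ≤ ε * ∑ x, π x * f₀ x ^ 2) :
    ∃ (g : α → ℝ) (lam : ℝ), (∀ x, ∑ y, P x y * g y = lam * g x) ∧
      (∑ x, π x * g x = 0) ∧ (∃ x, g x ≠ 0) ∧ 1 - ε ≤ lam ∧ lam < 1 := by
  classical
  have hsq : ∀ x, Real.sqrt (π x) > 0 := fun x => Real.sqrt_pos.2 (hπ x)
  have hsqsq : ∀ x, Real.sqrt (π x) * Real.sqrt (π x) = π x :=
    fun x => Real.mul_self_sqrt (hπ x).le
  set A : Matrix α α ℝ := Matrix.of fun x y => Real.sqrt (π x) * P x y / Real.sqrt (π y)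
    with hAdef
  have hAapp : ∀ x y, A x y = Real.sqrt (π x) * P x y / Real.sqrt (π y) := fun x y => rfl
  have hAsymm : ∀ x y, A x y = A y x := by
    intro x y
    rw [hAapp, hAapp, div_eq_div_iff (ne_of_gt (hsq y)) (ne_of_gt (hsq x))]
    linear_combination hrev x y + P x y * hsqsq x - P y x * hsqsq y
  have hA : A.IsHermitian := by
    ext x y
    simp only [Matrix.conjTranspose_apply, star_trivial]
    exact hAsymm y x
  set b := hA.eigenvectorBasis with hbdef
  set vals := hA.eigenvalues with hvdef
  -- orthonormality in sum form
  have horth : ∀ i j, ∑ x, b i x * b j x = if i = j then 1 else 0 := by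
    intro i j
    rw [← euclid_inner_eq]
    rcases eq_or_ne i j with h | h
    · subst h
      rw [real_inner_self_eq_norm_sq, b.orthonormal.1 i]
      simp
    · rw [b.orthonormal.2 h]
      simp [h]
  -- eigen equation in sum form
  have heig : ∀ i x, ∑ y, A x y * b i y = vals i * b i x := by
    intro i x
    have := congr_fun (hA.mulVec_eigenvectorBasis i) x
    simpa [Matrix.mulVec, dotProduct] using this
  -- sqrt pi is eigenvector with eigenvalue 1
  have hAP : ∀ x y, A x y * Real.sqrt (π y) = Real.sqrt (π x) * P x y := by
    intro x y
    rw [hAapp, div_mul_cancel₀ _ (ne_of_gt (hsq y))]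
  have hAsπ : ∀ x, ∑ y, A x y * Real.sqrt (π y) = Real.sqrt (π x) := by
    intro x
    simp_rw [hAP]
    rw [← Finset.mul_sum, hrow, mul_one]
  -- the test vector
  set h₀ : EuclideanSpace ℝ α := WithLp.toLp 2 (fun x => Real.sqrt (π x) * f₀ x) with hh₀
  set cc : α → ℝ := fun i => ∑ x, b i x * h₀ x with hcc
  have hinner_bh : ∀ i, ⟪(b i : EuclideanSpace ℝ α), h₀⟫ = cc i := fun i => euclid_inner_eq _ _
  -- Parseval
  have parseval : ∑ i, cc i ^ 2 = ∑ x, π x * f₀ x ^ 2 := by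
    have := b.sum_inner_mul_inner h₀ h₀
    rw [euclid_inner_eq h₀ h₀] at this
    calc ∑ i, cc i ^ 2 = ∑ i, ⟪h₀, b i⟫ * ⟪(b i : EuclideanSpace ℝ α), h₀⟫ := by
          refine Finset.sum_congr rfl fun i _ => ?_
          rw [hinner_bh, real_inner_comm, hinner_bh]; ring
      _ = ∑ x, h₀ x * h₀ x := this
      _ = ∑ x, π x * f₀ x ^ 2 := by
          refine Finset.sum_congr rfl fun x _ => ?_
          simp only [hh₀]
          nlinarith [hsqsq x]
  -- quadratic form
  set w : EuclideanSpace ℝ α := WithLp.toLp 2 (A.mulVec h₀ : α → ℝ) with hw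
  have hwx : ∀ x, w x = Real.sqrt (π x) * ∑ y, P x y * f₀ y := by
    intro x
    simp only [hw, Matrix.mulVec, dotProduct]
    rw [Finset.mul_sum]
    refine Finset.sum_congr rfl fun y _ => ?_
    show A x y * (Real.sqrt (π y) * f₀ y) = Real.sqrt (π x) * (P x y * f₀ y)
    rw [← mul_assoc, hAP x y]
    ring
  have hbw : ∀ i, ⟪(b i : EuclideanSpace ℝ α), w⟫ = vals i * cc i := by
    intro i
    rw [euclid_inner_eq]
    have swap : ∑ x, b i x * w x = ∑ y, (∑ x, A x y * b i x) * h₀ y := by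
      simp only [hw, Matrix.mulVec, dotProduct]
      simp_rw [Finset.mul_sum, Finset.sum_mul]
      rw [Finset.sum_comm]
      refine Finset.sum_congr rfl fun y _ => Finset.sum_congr rfl fun x _ => ?_
      rw [hAsymm x y]
      ring
    rw [swap]
    have : ∀ y, (∑ x, A x y * b i x) = vals i * b i y := by
      intro y
      rw [← heig i y]
      exact Finset.sum_congr rfl fun x _ => by rw [hAsymm y x]
    simp_rw [this]
    simp only [hcc]
    simp_rw [mul_assoc]
    rw [← Finset.mul_sum]
  have quadform : ∑ i, vals i * cc i ^ 2 = ∑ x, ∑ y, π x * P x y * (f₀ x * f₀ y) := by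
    have := b.sum_inner_mul_inner h₀ w
    calc ∑ i, vals i * cc i ^ 2
        = ∑ i, ⟪h₀, b i⟫ * ⟪(b i : EuclideanSpace ℝ α), w⟫ := by
          refine Finset.sum_congr rfl fun i _ => ?_
          rw [hbw, real_inner_comm, hinner_bh]; ring
      _ = ⟪h₀, w⟫ := this
      _ = ∑ x, ∑ y, π x * P x y * (f₀ x * f₀ y) := by
          rw [euclid_inner_eq]
          refine Finset.sum_congr rfl fun x _ => ?_
          show Real.sqrt (π x) * f₀ x * w x = _
          rw [hwx, Finset.mul_sum, Finset.mul_sum]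
          refine Finset.sum_congr rfl fun y _ => ?_
          linear_combination (f₀ x * P x y * f₀ y) * hsqsq x
  -- the quadratic form is at least (1-ε) * variance
  have hlow : (1 - ε) * ∑ i, cc i ^ 2 ≤ ∑ i, vals i * cc i ^ 2 := by
    rw [parseval, quadform]
    have := dirichlet_eq π P hrow hrev f₀
    nlinarith [hdir, hvar]
  -- all eigenvalues at most 1, via Dirichlet form nonnegativity
  have hval_le : ∀ i, vals i ≤ 1 := by
    intro i
    set g : α → ℝ := fun x => b i x / Real.sqrt (π x) with hg
    have hbg : ∀ x, b i x = Real.sqrt (π x) * g x := by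
      intro x
      simp only [hg]
      rw [mul_comm, div_mul_cancel₀ _ (ne_of_gt (hsq x))]
    have hPg : ∑ x, ∑ y, π x * P x y * (g x * g y) = vals i := by
      have expand : ∀ x, ∑ y, π x * P x y * (g x * g y)
          = (Real.sqrt (π x) * g x) * ∑ y, A x y * b i y := by
        intro x
        rw [Finset.mul_sum]
        refine Finset.sum_congr rfl fun y _ => ?_
        rw [hbg y]
        have hx : A x y * (Real.sqrt (π y) * g y) = Real.sqrt (π x) * P x y * g y := by
          rw [← mul_assoc, hAP x y]
        rw [hx]
        linear_combination (-(P x y * g x * g y)) * hsqsq x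
      simp_rw [expand, heig]
      have h2 : ∀ x, Real.sqrt (π x) * g x * (vals i * b i x) = vals i * (b i x * b i x) := by
        intro x; rw [hbg x]; ring
      simp_rw [h2]
      rw [← Finset.mul_sum]
      have h11 : ∑ x, b i x * b i x = 1 := by simpa using horth i i
      rw [h11, mul_one]
    have hgsq : ∑ x, π x * g x ^ 2 = 1 := by
      have : ∀ x, π x * g x ^ 2 = b i x * b i x := by
        intro x; rw [hbg x]; nlinarith [hsqsq x]
      simp_rw [this]
      simpa using horth i i
    have hD : 0 ≤ dirichletForm π P g := by
      unfold dirichletForm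
      have : ∀ x ∈ Finset.univ, (0:ℝ) ≤ ∑ y, π x * P x y * (g x - g y) ^ 2 :=
        fun x _ => Finset.sum_nonneg fun y _ =>
          mul_nonneg (mul_nonneg (hπ x).le (hP0 x y)) (sq_nonneg _)
      have := Finset.sum_nonneg this
      linarith
    have := dirichlet_eq π P hrow hrev g
    rw [hgsq, hPg] at this
    linarith
  -- pick a good index
  have hcsum : 0 < ∑ i, cc i ^ 2 := by rw [parseval]; exact hvar
  have hexist : ∃ i, cc i ≠ 0 ∧ 1 - ε ≤ vals i := by
    by_contra hcon
    push_neg at hcon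
    obtain ⟨j, hj⟩ : ∃ j, cc j ≠ 0 := by
      by_contra hall
      push_neg at hall
      simp only [hall] at hcsum
      simp at hcsum
    have hstrict : ∑ i, vals i * cc i ^ 2 < ∑ i, (1 - ε) * cc i ^ 2 := by
      refine Finset.sum_lt_sum (fun i _ => ?_) ⟨j, Finset.mem_univ j, ?_⟩
      · rcases eq_or_ne (cc i) 0 with h | h
        · simp [h]
        · have := hcon i h
          nlinarith [sq_nonneg (cc i), pow_pos (abs_pos.2 h) 2]
      · have := hcon j hj
        have h2 : 0 < cc j ^ 2 := by positivity
        nlinarith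
    rw [← Finset.mul_sum] at hstrict
    linarith
  obtain ⟨i, hci, hvi⟩ := hexist
  set g : α → ℝ := fun x => b i x / Real.sqrt (π x) with hg
  have hbg : ∀ x, b i x = Real.sqrt (π x) * g x := by
    intro x
    simp only [hg]
    rw [mul_comm, div_mul_cancel₀ _ (ne_of_gt (hsq x))]
  have hPg : ∀ x, ∑ y, P x y * g y = vals i * g x := by
    intro x
    have key : Real.sqrt (π x) * ∑ y, P x y * g y = Real.sqrt (π x) * (vals i * g x) := by
      have expand : ∀ y, A x y * b i y = Real.sqrt (π x) * (P x y * g y) := by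
        intro y
        rw [hbg y]
        have hx : A x y * (Real.sqrt (π y) * g y) = Real.sqrt (π x) * P x y * g y := by
          rw [← mul_assoc, hAP x y]
        rw [hx]
        ring
      have h3 := heig i x
      simp_rw [expand, ← Finset.mul_sum, hbg x] at h3
      rw [h3]; ring
    exact mul_left_cancel₀ (ne_of_gt (hsq x)) key
  -- vals i ≠ 1
  have hne1 : vals i ≠ 1 := by
    intro h1
    -- then Dirichlet form of g is zero, so g is constant
    have hgsq : ∑ x, π x * g x ^ 2 = 1 := by
      have : ∀ x, π x * g x ^ 2 = b i x * b i x := by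
        intro x; rw [hbg x]; nlinarith [hsqsq x]
      simp_rw [this]
      simpa using horth i i
    have hPgsum : ∑ x, ∑ y, π x * P x y * (g x * g y) = 1 := by
      have : ∀ x, ∑ y, π x * P x y * (g x * g y) = π x * g x * (vals i * g x) := by
        intro x
        have : ∑ y, π x * P x y * (g x * g y) = π x * g x * ∑ y, P x y * g y := by
          rw [Finset.mul_sum]
          exact Finset.sum_congr rfl fun y _ => by ring
        rw [this, hPg x]
      simp_rw [this, h1, one_mul]
      have : ∀ x, π x * g x * g x = π x * g x ^ 2 := fun x => by ring
      simp_rw [this]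
      exact hgsq
    have hD0 : dirichletForm π P g = 0 := by
      have := dirichlet_eq π P hrow hrev g
      rw [hgsq, hPgsum] at this
      linarith
    have hterms : ∀ x y, P x y ≠ 0 → g x = g y := by
      intro x y hPxy
      have hnn : ∀ p ∈ (Finset.univ : Finset (α × α)),
          (0:ℝ) ≤ π p.1 * P p.1 p.2 * (g p.1 - g p.2) ^ 2 := fun p _ =>
        mul_nonneg (mul_nonneg (hπ p.1).le (hP0 p.1 p.2)) (sq_nonneg _)
      have hsum0 : ∑ p : α × α, π p.1 * P p.1 p.2 * (g p.1 - g p.2) ^ 2 = 0 := by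
        have : ∑ p : α × α, π p.1 * P p.1 p.2 * (g p.1 - g p.2) ^ 2
            = ∑ x, ∑ y, π x * P x y * (g x - g y) ^ 2 := Fintype.sum_prod_type _
        rw [this]
        unfold dirichletForm at hD0
        linarith
      have := (Finset.sum_eq_zero_iff_of_nonneg hnn).1 hsum0 ⟨x, y⟩ (Finset.mem_univ _)
      simp only at this
      have hP' : 0 < P x y := lt_of_le_of_ne (hP0 x y) (Ne.symm hPxy)
      have : (g x - g y) ^ 2 = 0 := by
        by_contra hne
        have h2 : 0 < (g x - g y) ^ 2 := lt_of_le_of_ne (sq_nonneg _) (Ne.symm hne)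
        have h3 := mul_pos (mul_pos (hπ x) hP') h2
        linarith
      have := pow_eq_zero_iff (n := 2) (by norm_num) |>.1 this
      linarith [sub_eq_zero.1 this]
    have hgconst := hconn g hterms
    -- so cc i = 0, contradiction
    obtain x₀ := Classical.arbitrary α
    have : cc i = g x₀ * ∑ x, π x * f₀ x := by
      simp only [hcc]
      rw [Finset.mul_sum]
      refine Finset.sum_congr rfl fun x _ => ?_
      have hgx : g x = g x₀ := hgconst x x₀
      show b i x * (Real.sqrt (π x) * f₀ x) = g x₀ * (π x * f₀ x)
      rw [hbg x, hgx]
      linear_combination (g x₀ * f₀ x) * hsqsq x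
    rw [hmean, mul_zero] at this
    exact hci this
  -- mean zero
  have hmean_g : ∑ x, π x * g x = 0 := by
    have hX : ∑ x, Real.sqrt (π x) * b i x = ∑ x, π x * g x := by
      refine Finset.sum_congr rfl fun x _ => ?_
      rw [hbg x]
      linear_combination g x * hsqsq x
    have key : vals i * ∑ x, Real.sqrt (π x) * b i x = ∑ x, Real.sqrt (π x) * b i x := by
      calc vals i * ∑ x, Real.sqrt (π x) * b i x
          = ∑ x, Real.sqrt (π x) * (vals i * b i x) := by
            rw [Finset.mul_sum]; exact Finset.sum_congr rfl fun x _ => by ring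
        _ = ∑ x, Real.sqrt (π x) * ∑ y, A x y * b i y := by simp_rw [heig]
        _ = ∑ y, (∑ x, A x y * Real.sqrt (π x)) * b i y := by
            simp_rw [Finset.mul_sum, Finset.sum_mul]
            rw [Finset.sum_comm]
            exact Finset.sum_congr rfl fun y _ => Finset.sum_congr rfl fun x _ => by ring
        _ = ∑ y, Real.sqrt (π y) * b i y := by
            refine Finset.sum_congr rfl fun y _ => ?_
            congr 1
            rw [← hAsπ y]
            exact Finset.sum_congr rfl fun x _ => by rw [hAsymm x y]
    have : (vals i - 1) * ∑ x, Real.sqrt (π x) * b i x = 0 := by linarith [key]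
    have h2 := mul_eq_zero.1 this
    rcases h2 with h2 | h2
    · exact absurd (by linarith [sub_eq_zero.1 h2] : vals i = 1) hne1
    · rw [← hX]; exact h2
  -- g nonzero somewhere
  have hgne : ∃ x, g x ≠ 0 := by
    by_contra hall
    push_neg at hall
    have : ∀ x, b i x = 0 := by
      intro x
      rw [hbg x, hall x, mul_zero]
    have h1 := horth i i
    simp only [if_pos rfl] at h1
    simp [this] at h1
  exact ⟨g, vals i, hPg, hmean_g, hgne, hvi, lt_of_le_of_ne (hval_le i) hne1⟩
lemma mix_lb {α : Type*} [Fintype α] [DecidableEq α] [Nonempty α] (π : α → ℝ)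
    (P : α → α → ℝ)
    (hπ : ∀ x, 0 < π x) (hπ1 : ∑ x, π x = 1)
    (hP0 : ∀ x y, 0 ≤ P x y) (hrow : ∀ x, ∑ y, P x y = 1)
    (hrev : ∀ x y, π x * P x y = π y * P y x)
    (hconn : ∀ g : α → ℝ, (∀ x y, P x y ≠ 0 → g x = g y) → ∀ x y, g x = g y)
    (ε : ℝ) (hε : 0 < ε) (hε1 : ε < 1)
    (f₀ : α → ℝ) (hmean : ∑ x, π x * f₀ x = 0) (hvar : 0 < ∑ x, π x * f₀ x ^ 2)
    (hdir : dirichletForm π P f₀ ≤ ε * ∑ x, π x * f₀ x ^ 2)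
    (t : ℕ) (ht : ∀ x, (1/2) * ∑ y, |kernelPow P t x y - π y| ≤ 1/4) :
    Real.log 2 * ((1 - ε)/ε) ≤ (t : ℝ) := by
  classical
  obtain ⟨g, lam, hPg, hmg, ⟨x₁, hx₁⟩, hlam1, hlam2⟩ :=
    eigen_lb π P hπ hπ1 hP0 hrow hrev hconn ε hε hε1 f₀ hmean hvar hdir
  have hlampos : 0 < lam := by linarith
  have hiter : ∀ s x, ∑ y, kernelPow P s x y * g y = lam ^ s * g x := by
    intro s
    induction s with
    | zero => intro x; simp [kernelPow, Finset.sum_ite_eq]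
    | succ s ih =>
      intro x
      simp only [kernelPow]
      calc ∑ y, (∑ z, kernelPow P s x z * P z y) * g y
          = ∑ z, kernelPow P s x z * ∑ y, P z y * g y := by
            simp_rw [Finset.sum_mul, Finset.mul_sum, mul_assoc]
            rw [Finset.sum_comm]
        _ = ∑ z, kernelPow P s x z * (lam * g z) := by simp_rw [hPg]
        _ = lam * ∑ z, kernelPow P s x z * g z := by
            rw [Finset.mul_sum]
            exact Finset.sum_congr rfl fun z _ => by ring
        _ = lam ^ (s + 1) * g x := by rw [ih x]; ring
  obtain ⟨xm, -, hmax⟩ := Finset.exists_max_image Finset.univ (fun x => |g x|)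
    ⟨x₁, Finset.mem_univ x₁⟩
  have hgx : 0 < |g xm| := lt_of_lt_of_le (abs_pos.2 hx₁) (hmax x₁ (Finset.mem_univ x₁))
  have key : lam ^ t * |g xm| ≤ |g xm| * (1/2) := by
    have h1 : lam ^ t * g xm = ∑ y, (kernelPow P t xm y - π y) * g y := by
      have he : ∑ y, (kernelPow P t xm y - π y) * g y
          = ∑ y, kernelPow P t xm y * g y - ∑ y, π y * g y := by
        rw [← Finset.sum_sub_distrib]
        exact Finset.sum_congr rfl fun y _ => by ring
      rw [he, hmg, sub_zero, hiter t xm]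
    have h2 : |lam ^ t * g xm| ≤ ∑ y, |kernelPow P t xm y - π y| * |g xm| := by
      rw [h1]
      refine (Finset.abs_sum_le_sum_abs _ _).trans (Finset.sum_le_sum fun y _ => ?_)
      rw [abs_mul]
      exact mul_le_mul_of_nonneg_left (hmax y (Finset.mem_univ y)) (abs_nonneg _)
    have h3 : ∑ y, |kernelPow P t xm y - π y| ≤ 1/2 := by linarith [ht xm]
    have h4 : |lam ^ t * g xm| = lam ^ t * |g xm| := by
      rw [abs_mul, abs_of_pos (pow_pos hlampos t)]
    rw [← Finset.sum_mul, h4] at h2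
    calc lam ^ t * |g xm| ≤ (∑ y, |kernelPow P t xm y - π y|) * |g xm| := h2
      _ ≤ (1/2) * |g xm| := mul_le_mul_of_nonneg_right h3 (abs_nonneg _)
      _ = |g xm| * (1/2) := by ring
  have hpow : lam ^ t ≤ 1/2 := by nlinarith
  have hlog : Real.log 2 ≤ (t : ℝ) * (-Real.log lam) := by
    have h1 : Real.log (lam ^ t) ≤ Real.log (1/2) :=
      Real.log_le_log (pow_pos hlampos t) hpow
    rw [Real.log_pow, one_div, Real.log_inv] at h1
    push_cast at h1 ⊢
    linarith
  have hloglam : -Real.log lam ≤ (1 - lam)/lam := by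
    have h1 : Real.log lam⁻¹ ≤ lam⁻¹ - 1 :=
      Real.log_le_sub_one_of_pos (inv_pos.2 hlampos)
    rw [Real.log_inv] at h1
    have h2 : lam⁻¹ - 1 = (1 - lam)/lam := by field_simp
    linarith [h2 ▸ h1]
  have h4 : Real.log 2 ≤ (t : ℝ) * ((1 - lam)/lam) :=
    le_trans hlog (mul_le_mul_of_nonneg_left hloglam (Nat.cast_nonneg t))
  have h5 : Real.log 2 * lam ≤ (t : ℝ) * (1 - lam) := by
    rw [mul_div_assoc'] at h4
    exact (le_div_iff₀ hlampos).1 h4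
  have h6 : (1 - ε)/ε ≤ lam/(1 - lam) :=
    div_le_div₀ hlampos.le hlam1 (by linarith) (by linarith)
  have h7 : Real.log 2 * (lam/(1 - lam)) ≤ (t : ℝ) := by
    rw [← mul_div_assoc]
    rw [div_le_iff₀ (by linarith : (0:ℝ) < 1 - lam)]
    linarith
  have hlog2 : 0 ≤ Real.log 2 := Real.log_nonneg (by norm_num)
  calc Real.log 2 * ((1 - ε)/ε) ≤ Real.log 2 * (lam/(1 - lam)) :=
        mul_le_mul_of_nonneg_left h6 hlog2
    _ ≤ (t : ℝ) := h7
section Glauber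
variable {N : ℕ}

lemma gibbs_pos (β : ℝ) (H : (Fin N → Bool) → ℝ) (σ : Fin N → Bool) :
    0 < gibbs β H σ := by
  unfold gibbs
  apply div_pos (Real.exp_pos _)
  exact Finset.sum_pos (fun τ _ => Real.exp_pos _) ⟨σ, Finset.mem_univ σ⟩

lemma gibbs_sum (β : ℝ) (H : (Fin N → Bool) → ℝ) : ∑ σ, gibbs β H σ = 1 := by
  unfold gibbs
  rw [← Finset.sum_div, div_self]
  exact ne_of_gt (Finset.sum_pos (fun τ _ => Real.exp_pos _)
    ⟨Classical.arbitrary _, Finset.mem_univ _⟩)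

lemma bflip_apply_self (σ : Fin N → Bool) (i : Fin N) : bflip σ i i = !σ i := by
  simp [bflip]

lemma bflip_apply_ne (σ : Fin N → Bool) {i j : Fin N} (h : j ≠ i) : bflip σ i j = σ j := by
  simp [bflip, Function.update_of_ne h]

lemma bflip_ne (σ : Fin N → Bool) (i : Fin N) : bflip σ i ≠ σ := by
  intro h
  have := congr_fun h i
  rw [bflip_apply_self] at this
  exact Bool.not_ne_self (σ i) (by simp [this])

lemma bflip_bflip (σ : Fin N → Bool) (i : Fin N) : bflip (bflip σ i) i = σ := by
  funext j
  rcases eq_or_ne j i with h | h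
  · subst h; rw [bflip_apply_self, bflip_apply_self, Bool.not_not]
  · rw [bflip_apply_ne _ h, bflip_apply_ne _ h]

lemma bflip_inj (σ : Fin N → Bool) : Function.Injective (bflip σ) := by
  intro i j h
  by_contra hne
  have h1 := congr_fun h i
  rw [bflip_apply_self, bflip_apply_ne σ hne] at h1
  exact Bool.not_ne_self (σ i) (by simp [h1])

variable (μ : (Fin N → Bool) → ℝ)

lemma glauberP_flip (hN : 1 ≤ N) (σ : Fin N → Bool) (i : Fin N) :
    glauberP μ σ (bflip σ i)
      = (1 / N) * (μ (bflip σ i) / (μ σ + μ (bflip σ i))) := by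
  unfold glauberP
  rw [if_neg (Ne.symm (bflip_ne σ i)), if_pos ⟨i, rfl⟩]

lemma glauberP_not_flip (σ τ : Fin N → Bool) (h1 : σ ≠ τ) (h2 : ¬ ∃ i, τ = bflip σ i) :
    glauberP μ σ τ = 0 := by
  unfold glauberP
  rw [if_neg h1, if_neg h2]

lemma glauberP_diag_pos (hμ : ∀ σ, 0 < μ σ) (hN : 1 ≤ N) (σ : Fin N → Bool) : 0 < glauberP μ σ σ := by
  unfold glauberP
  rw [if_pos rfl]
  have hNpos : (0:ℝ) < N := by exact_mod_cast hN
  have hterm : ∀ i : Fin N, (1 / (N:ℝ)) * (μ (bflip σ i) / (μ σ + μ (bflip σ i)))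
      < 1 / N := by
    intro i
    have hd : 0 < μ σ + μ (bflip σ i) := by linarith [hμ σ, hμ (bflip σ i)]
    have : μ (bflip σ i) / (μ σ + μ (bflip σ i)) < 1 := by
      rw [div_lt_one hd]; linarith [hμ σ]
    calc (1 / (N:ℝ)) * (μ (bflip σ i) / (μ σ + μ (bflip σ i)))
        < (1 / N) * 1 := by
          apply mul_lt_mul_of_pos_left this
          positivity
      _ = 1 / N := mul_one _
  have hsum : ∑ i : Fin N, (1 / (N:ℝ)) * (μ (bflip σ i) / (μ σ + μ (bflip σ i)))
      < ∑ _i : Fin N, (1 / (N:ℝ)) := by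
    refine Finset.sum_lt_sum_of_nonempty ?_ fun i _ => hterm i
    exact Finset.univ_nonempty_iff.2 ⟨⟨0, hN⟩⟩
  have : ∑ _i : Fin N, (1 / (N:ℝ)) = 1 := by
    rw [Finset.sum_const, Finset.card_univ, Fintype.card_fin, nsmul_eq_mul]
    field_simp
  linarith

lemma glauberP_nonneg (hμ : ∀ σ, 0 < μ σ) (σ τ : Fin N → Bool) : 0 ≤ glauberP μ σ τ := by
  unfold glauberP
  split_ifs with h1 h2
  · have hterm : ∀ i : Fin N, (1 / (N:ℝ)) * (μ (bflip σ i) / (μ σ + μ (bflip σ i)))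
        ≤ 1 / N := by
      intro i
      have hd : 0 < μ σ + μ (bflip σ i) := by linarith [hμ σ, hμ (bflip σ i)]
      have h3 : μ (bflip σ i) / (μ σ + μ (bflip σ i)) ≤ 1 := by
        rw [div_le_one hd]; linarith [hμ σ]
      have h4 : (0:ℝ) ≤ 1 / N := by positivity
      calc (1 / (N:ℝ)) * (μ (bflip σ i) / (μ σ + μ (bflip σ i))) ≤ (1 / N) * 1 :=
            mul_le_mul_of_nonneg_left h3 h4
        _ = 1 / N := mul_one _
    have hsum : ∑ i : Fin N, (1 / (N:ℝ)) * (μ (bflip σ i) / (μ σ + μ (bflip σ i)))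
        ≤ ∑ _i : Fin N, (1 / (N:ℝ)) := Finset.sum_le_sum fun i _ => hterm i
    have hle : ∑ _i : Fin N, (1 / (N:ℝ)) ≤ 1 := by
      rcases Nat.eq_zero_or_pos N with h | h
      · subst h; simp
      · rw [Finset.sum_const, Finset.card_univ, Fintype.card_fin, nsmul_eq_mul]
        rw [mul_one_div, div_self]
        positivity
    linarith
  · have hd : 0 < μ σ + μ τ := by linarith [hμ σ, hμ τ]
    exact mul_nonneg (div_nonneg zero_le_one (Nat.cast_nonneg N))
      (div_nonneg (hμ τ).le hd.le)
  · exact le_refl 0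

lemma glauberP_row (hN : 1 ≤ N) (σ : Fin N → Bool) : ∑ τ, glauberP μ σ τ = 1 := by
  classical
  have hsplit : ∑ τ, glauberP μ σ τ
      = ∑ τ ∈ Finset.univ.erase σ, glauberP μ σ τ + glauberP μ σ σ :=
    (Finset.sum_erase_add _ _ (Finset.mem_univ σ)).symm
  have himg : (Finset.univ.image (bflip σ)) ⊆ Finset.univ.erase σ := by
    intro τ hτ
    obtain ⟨i, -, rfl⟩ := Finset.mem_image.1 hτ
    exact Finset.mem_erase.2 ⟨bflip_ne σ i, Finset.mem_univ _⟩
  have herase : ∑ τ ∈ Finset.univ.erase σ, glauberP μ σ τ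
      = ∑ τ ∈ Finset.univ.image (bflip σ), glauberP μ σ τ := by
    refine (Finset.sum_subset himg fun τ hτ hτ' => ?_).symm
    have h2 : ¬ ∃ i, τ = bflip σ i := by
      rintro ⟨i, rfl⟩
      exact hτ' (Finset.mem_image.2 ⟨i, Finset.mem_univ i, rfl⟩)
    exact glauberP_not_flip μ σ τ (Ne.symm (Finset.mem_erase.1 hτ).1) h2
  have himage : ∑ τ ∈ Finset.univ.image (bflip σ), glauberP μ σ τ
      = ∑ i : Fin N, glauberP μ σ (bflip σ i) :=
    Finset.sum_image (fun i _ j _ h => bflip_inj σ h)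
  have hdiag : glauberP μ σ σ
      = 1 - ∑ i : Fin N, (1 / N) * (μ (bflip σ i) / (μ σ + μ (bflip σ i))) := by
    unfold glauberP
    rw [if_pos rfl]
  rw [hsplit, herase, himage, hdiag]
  simp_rw [glauberP_flip μ hN σ]
  ring

lemma glauberP_rev (hμ : ∀ σ, 0 < μ σ) (σ τ : Fin N → Bool) :
    μ σ * glauberP μ σ τ = μ τ * glauberP μ τ σ := by
  rcases eq_or_ne σ τ with h | h
  · subst h; rfl
  · rcases Classical.em (∃ i, τ = bflip σ i) with ⟨i, rfl⟩ | hni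
    · have h1 : glauberP μ σ (bflip σ i)
          = (1 / N) * (μ (bflip σ i) / (μ σ + μ (bflip σ i))) := by
        unfold glauberP
        rw [if_neg h, if_pos ⟨i, rfl⟩]
      have h2 : glauberP μ (bflip σ i) σ = (1 / N) * (μ σ / (μ (bflip σ i) + μ σ)) := by
        unfold glauberP
        rw [if_neg (Ne.symm h), if_pos ⟨i, (bflip_bflip σ i).symm⟩]
      rw [h1, h2]
      have hd : 0 < μ σ + μ (bflip σ i) := by linarith [hμ σ, hμ (bflip σ i)]
      have hd' : 0 < μ (bflip σ i) + μ σ := by linarith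
      field_simp
      ring
    · have hni' : ¬ ∃ i, σ = bflip τ i := by
        rintro ⟨i, rfl⟩
        exact hni ⟨i, (bflip_bflip τ i).symm⟩
      rw [glauberP_not_flip μ σ τ h hni, glauberP_not_flip μ τ σ (Ne.symm h) hni',
        mul_zero, mul_zero]

lemma hammingDist'_comm (σ τ : Fin N → Bool) : hammingDist' σ τ = hammingDist' τ σ := by
  unfold hammingDist'
  congr 1
  ext i
  simp [ne_comm]

lemma hammingDist'_eq_zero {σ τ : Fin N → Bool} (h : hammingDist' σ τ = 0) : σ = τ := by
  funext i
  by_contra hne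
  have : i ∈ Finset.univ.filter (fun i => σ i ≠ τ i) := by simp [hne]
  rw [Finset.card_eq_zero.1 h] at this
  exact absurd this (Finset.notMem_empty i)

lemma hammingDist'_le (σ τ : Fin N → Bool) : hammingDist' σ τ ≤ N := by
  unfold hammingDist'
  calc (Finset.univ.filter (fun i => σ i ≠ τ i)).card ≤ Finset.univ.card :=
    Finset.card_le_card (Finset.filter_subset _ _)
  _ = N := by simp

lemma hammingDist'_bflip {σ τ : Fin N → Bool} {i : Fin N} (h : σ i ≠ τ i) :
    hammingDist' (bflip σ i) τ + 1 = hammingDist' σ τ := by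
  classical
  unfold hammingDist'
  have hset : Finset.univ.filter (fun j => bflip σ i j ≠ τ j)
      = (Finset.univ.filter (fun j => σ j ≠ τ j)).erase i := by
    ext j
    simp only [Finset.mem_filter, Finset.mem_erase, Finset.mem_univ, true_and]
    rcases eq_or_ne j i with hj | hj
    · subst hj
      rw [bflip_apply_self]
      constructor
      · intro hcon
        exact absurd (by revert h hcon; cases σ j <;> cases τ j <;> simp) hcon
      · rintro ⟨hcon, -⟩
        exact absurd rfl hcon
    · rw [bflip_apply_ne _ hj]
      tauto
  rw [hset]
  have hi : i ∈ Finset.univ.filter (fun j => σ j ≠ τ j) := by simp [h]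
  rw [Finset.card_erase_of_mem hi]
  have : 1 ≤ (Finset.univ.filter (fun j => σ j ≠ τ j)).card :=
    Finset.card_pos.2 ⟨i, hi⟩
  omega

lemma glauber_conn (hμ : ∀ σ, 0 < μ σ) (hN : 1 ≤ N) (g : (Fin N → Bool) → ℝ)
    (hg : ∀ σ τ, glauberP μ σ τ ≠ 0 → g σ = g τ) : ∀ σ τ, g σ = g τ := by
  have hstep : ∀ σ i, g σ = g (bflip σ i) := by
    intro σ i
    refine hg σ (bflip σ i) ?_
    rw [glauberP_flip μ hN σ i]
    have hd : 0 < μ σ + μ (bflip σ i) := by linarith [hμ σ, hμ (bflip σ i)]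
    have hNpos : (0:ℝ) < N := by exact_mod_cast hN
    exact ne_of_gt (mul_pos (one_div_pos.2 hNpos) (div_pos (hμ _) hd))
  have key : ∀ n σ τ, hammingDist' σ τ = n → g σ = g τ := by
    intro n
    induction n with
    | zero => intro σ τ hd; rw [hammingDist'_eq_zero hd]
    | succ n ih =>
      intro σ τ hd
      obtain ⟨i, hi⟩ : ∃ i, σ i ≠ τ i := by
        by_contra hall
        push_neg at hall
        have : hammingDist' σ τ = 0 := by
          unfold hammingDist'
          rw [Finset.card_eq_zero, Finset.filter_eq_empty_iff]
          intro j _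
          simpa using hall j
        omega
      have h1 : hammingDist' (bflip σ i) τ = n := by
        have := hammingDist'_bflip hi
        omega
      rw [hstep σ i]
      exact ih (bflip σ i) τ h1
  intro σ τ
  exact key (hammingDist' σ τ) σ τ rfl

lemma kernelPow_glauber_pos (hμ : ∀ σ, 0 < μ σ) (hN : 1 ≤ N) :
    ∀ n (σ τ : Fin N → Bool), hammingDist' σ τ ≤ n → 0 < kernelPow (glauberP μ) n σ τ := by
  intro n
  induction n with
  | zero =>
    intro σ τ hd
    have : σ = τ := hammingDist'_eq_zero (Nat.le_zero.1 hd)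
    subst this
    simp [kernelPow]
  | succ n ih =>
    intro σ τ hd
    have hnn : ∀ z, 0 ≤ kernelPow (glauberP μ) n σ z * glauberP μ z τ := fun z =>
      mul_nonneg (kernelPow_nonneg _ (glauberP_nonneg μ hμ) n σ z) (glauberP_nonneg μ hμ z τ)
    rcases Nat.eq_zero_or_pos (hammingDist' σ τ) with h0 | hpos
    · have : σ = τ := hammingDist'_eq_zero h0
      subst this
      have hone : 0 < kernelPow (glauberP μ) n σ σ * glauberP μ σ σ :=
        mul_pos (ih σ σ (by omega)) (glauberP_diag_pos μ hμ hN σ)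
      calc (0:ℝ) < kernelPow (glauberP μ) n σ σ * glauberP μ σ σ := hone
        _ ≤ ∑ z, kernelPow (glauberP μ) n σ z * glauberP μ z σ :=
          Finset.single_le_sum (fun z _ => hnn z) (Finset.mem_univ σ)
        _ = kernelPow (glauberP μ) (n+1) σ σ := rfl
    · obtain ⟨i, hi⟩ : ∃ i, σ i ≠ τ i := by
        by_contra hall
        push_neg at hall
        have : hammingDist' σ τ = 0 := by
          unfold hammingDist'
          rw [Finset.card_eq_zero, Finset.filter_eq_empty_iff]
          intro j _
          simpa using hall j
        omega
      have hi' : τ i ≠ σ i := Ne.symm hi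
      set z := bflip τ i with hz
      have hdz : hammingDist' σ z ≤ n := by
        have h1 : hammingDist' (bflip τ i) σ + 1 = hammingDist' τ σ := hammingDist'_bflip hi'
        rw [hammingDist'_comm σ z, hz]
        rw [hammingDist'_comm σ τ] at hd
        omega
      have hPz : 0 < glauberP μ z τ := by
        have : τ = bflip z i := (bflip_bflip τ i).symm
        rw [this, glauberP_flip μ hN z i]
        have hd' : 0 < μ z + μ (bflip z i) := by linarith [hμ z, hμ (bflip z i)]
        have hNpos : (0:ℝ) < N := by exact_mod_cast hN
        exact mul_pos (one_div_pos.2 hNpos) (div_pos (hμ _) hd')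
      have hone : 0 < kernelPow (glauberP μ) n σ z * glauberP μ z τ :=
        mul_pos (ih σ z hdz) hPz
      calc (0:ℝ) < kernelPow (glauberP μ) n σ z * glauberP μ z τ := hone
        _ ≤ ∑ w, kernelPow (glauberP μ) n σ w * glauberP μ w τ :=
          Finset.single_le_sum (fun w _ => hnn w) (Finset.mem_univ z)
        _ = kernelPow (glauberP μ) (n+1) σ τ := rfl

end Glauber
section Main
variable {N : ℕ}

lemma hammingDist'_bflip' {σ τ : Fin N → Bool} {i : Fin N} (h : σ i = τ i) :
    hammingDist' (bflip σ i) τ = hammingDist' σ τ + 1 := by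
  have h2 : bflip σ i i ≠ τ i := by
    rw [bflip_apply_self, ← h]
    cases σ i <;> simp
  have := hammingDist'_bflip h2
  rw [bflip_bflip] at this
  omega

lemma bflip_adj_symm (σ τ : Fin N → Bool) : (∃ i, τ = bflip σ i) ↔ (∃ i, σ = bflip τ i) := by
  constructor
  · rintro ⟨i, rfl⟩; exact ⟨i, (bflip_bflip σ i).symm⟩
  · rintro ⟨i, rfl⟩; exact ⟨i, (bflip_bflip τ i).symm⟩

lemma hamming_inv (σ τ : Fin N → Bool) :
    hammingDist' (fun i => !σ i) τ = N - hammingDist' σ τ := by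
  classical
  unfold hammingDist'
  have hset : Finset.univ.filter (fun i => (!σ i) ≠ τ i)
      = Finset.univ \ Finset.univ.filter (fun i => σ i ≠ τ i) := by
    ext i
    simp only [Finset.mem_filter, Finset.mem_sdiff, Finset.mem_univ, true_and]
    cases σ i <;> cases τ i <;> simp
  rw [hset, Finset.card_sdiff_of_subset (Finset.filter_subset _ _)]
  simp

set_option maxHeartbeats 2000000 in
theorem stmt10' {N : ℕ} (hN : 1 ≤ N) (β c : ℝ) (hβ : 0 < β) (hc : 0 < c)
    (H : (Fin N → Bool) → ℝ) (heven : ∀ σ, H (fun i => !σ i) = H σ)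
    (σstar : Fin N → Bool) (ρ Δ : ℝ) (hρ : 0 < ρ) (hρ' : ρ < 1/2) (hΔ : 0 < Δ)
    (hsphere : ∀ σ : Fin N → Bool,
      hammingDist' σ σstar = Nat.floor (ρ * N / 2) → H σstar - H σ ≥ Δ)
    (hβΔ : β * Δ ≥ (Real.log 2 + c) * N) :
    spectralGap (gibbs β H) (glauberP (gibbs β H)) ≤ 2 * Real.exp (-c * N) ∧
    (Real.exp (c * N) / 2 - 1) * Real.log 2
      ≤ (mixingTime (gibbs β H) (glauberP (gibbs β H)) : ℝ) := by
  classical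
  set π : (Fin N → Bool) → ℝ := gibbs β H with hπdef
  set P : (Fin N → Bool) → (Fin N → Bool) → ℝ := glauberP π with hPdef
  have hπ : ∀ σ, 0 < π σ := gibbs_pos β H
  have hπ1 : ∑ σ, π σ = 1 := gibbs_sum β H
  have hrev : ∀ σ τ, π σ * P σ τ = π τ * P τ σ := glauberP_rev π hπ
  have hrow : ∀ σ, ∑ τ, P σ τ = 1 := glauberP_row π hN
  have hP0 : ∀ σ τ, 0 ≤ P σ τ := glauberP_nonneg π hπ
  have hconn := glauber_conn π hπ hN
  set r := Nat.floor (ρ * N / 2) with hrdef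
  -- r is at least 1
  have hrpos : 1 ≤ r := by
    by_contra hr0
    have hr0' : r = 0 := by omega
    have hd0 : hammingDist' σstar σstar = r := by
      rw [hr0']
      unfold hammingDist'
      rw [Finset.card_eq_zero, Finset.filter_eq_empty_iff]
      intro j _
      simp
    have := hsphere σstar hd0
    linarith
  -- r is small
  have hrN : 2 * r ≤ N := by
    have h1 : (r : ℝ) ≤ ρ * N / 2 := Nat.floor_le (by positivity)
    have h2 : (r : ℝ) < (N : ℝ) / 4 := by nlinarith [show (0:ℝ) < N by exact_mod_cast hN]
    have : (2 * r : ℝ) ≤ (N:ℝ) := by nlinarith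
    exact_mod_cast this
  set S : Finset (Fin N → Bool) := Finset.univ.filter (fun σ => hammingDist' σ σstar < r)
    with hSdef
  set f₀ : (Fin N → Bool) → ℝ := fun σ => if σ ∈ S then 1 else 0 with hf₀
  set pS : ℝ := ∑ σ ∈ S, π σ with hpSdef
  have hσstarS : σstar ∈ S := by
    rw [hSdef]
    refine Finset.mem_filter.2 ⟨Finset.mem_univ _, ?_⟩
    have : hammingDist' σstar σstar = 0 := by
      unfold hammingDist'
      rw [Finset.card_eq_zero, Finset.filter_eq_empty_iff]
      intro j _
      simp
    omega
  have hmeanf : ∑ x, π x * f₀ x = pS := by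
    rw [hpSdef]
    simp only [hf₀, mul_ite, mul_one, mul_zero]
    rw [Finset.sum_ite_mem, Finset.univ_inter]
  have hpS_pos : 0 < pS :=
    Finset.sum_pos (fun x _ => hπ x) ⟨σstar, hσstarS⟩
  -- antipodal map bound : pS ≤ 1/2
  have hpS_half : pS ≤ 1/2 := by
    set inv : (Fin N → Bool) → (Fin N → Bool) := fun σ => fun i => !σ i with hinv
    have hinv_inj : Function.Injective inv := by
      intro σ τ h
      funext i
      have := congr_fun h i
      simp only [hinv] at this
      exact Bool.not_inj this
    have hπinv : ∀ σ, π (inv σ) = π σ := by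
      intro σ
      simp only [hπdef, gibbs, hinv]
      rw [heven σ]
    have hdisj : Disjoint S (S.image inv) := by
      rw [Finset.disjoint_right]
      intro τ hτ1 hτ2
      obtain ⟨σ, hσS, rfl⟩ := Finset.mem_image.1 hτ1
      have h1 : hammingDist' σ σstar < r := (Finset.mem_filter.1 hσS).2
      have h2 : hammingDist' (inv σ) σstar < r := (Finset.mem_filter.1 hτ2).2
      have h3 : hammingDist' (inv σ) σstar = N - hammingDist' σ σstar := hamming_inv σ σstar
      omega
    have hsum_inv : ∑ σ ∈ S.image inv, π σ = pS := by
      rw [Finset.sum_image (fun a _ b _ h => hinv_inj h)]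
      exact Finset.sum_congr rfl fun σ _ => hπinv σ
    have hunion : pS + pS ≤ 1 := by
      calc pS + pS = ∑ σ ∈ S ∪ S.image inv, π σ := by
            rw [Finset.sum_union hdisj, hsum_inv]
        _ ≤ ∑ σ, π σ := Finset.sum_le_sum_of_subset_of_nonneg
            (Finset.subset_univ _) (fun x _ _ => (hπ x).le)
        _ = 1 := hπ1
    linarith
  -- centered indicator
  set g₀ : (Fin N → Bool) → ℝ := fun σ => f₀ σ - pS with hg₀
  have hmean : ∑ x, π x * g₀ x = 0 := by
    simp only [hg₀, mul_sub]
    rw [Finset.sum_sub_distrib, hmeanf, ← Finset.sum_mul, hπ1, one_mul, sub_self]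
  have hf01 : ∀ x, f₀ x ^ 2 = f₀ x := by
    intro x
    simp only [hf₀]
    split_ifs <;> norm_num
  have hvarg : ∑ x, π x * g₀ x ^ 2 = pS * (1 - pS) := by
    have hexp : ∀ x, π x * g₀ x ^ 2
        = π x * f₀ x - 2 * pS * (π x * f₀ x) + pS ^ 2 * π x := by
      intro x
      have h1 : g₀ x ^ 2 = f₀ x ^ 2 - 2 * pS * f₀ x + pS ^ 2 := by
        simp only [hg₀]; ring
      rw [mul_comm (π x) (g₀ x ^ 2), h1, hf01 x]
      ring
    simp_rw [hexp]
    rw [Finset.sum_add_distrib, Finset.sum_sub_distrib, hmeanf, ← Finset.mul_sum,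
      ← Finset.mul_sum, hmeanf, hπ1]
    ring
  have hvarpos : 0 < ∑ x, π x * g₀ x ^ 2 := by
    rw [hvarg]
    nlinarith
  -- Dirichlet form bound
  set sph : Finset (Fin N → Bool) := Finset.univ.filter (fun σ => hammingDist' σ σstar = r)
    with hsph
  set B : ℝ := ∑ z ∈ sph, π z with hB
  have hDf : dirichletForm π P f₀ ≤ B := by
    set q : (Fin N → Bool) → (Fin N → Bool) → ℝ := fun x y =>
      if ∃ i, y = bflip x i then
        (if y ∈ sph then (1 / N) * π y else 0) + (if x ∈ sph then (1 / N) * π x else 0)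
      else 0 with hq
    have hNpos : (0:ℝ) < N := by exact_mod_cast hN
    have hq0 : ∀ x y, 0 ≤ q x y := by
      intro x y
      have t1 : (0:ℝ) ≤ 1 / N * π y := mul_nonneg (by positivity) (hπ y).le
      have t2 : (0:ℝ) ≤ 1 / N * π x := mul_nonneg (by positivity) (hπ x).le
      simp only [hq]
      split_ifs <;> linarith
    have hboundT : ∀ x y, π x * P x y * (f₀ x - f₀ y) ^ 2 ≤ q x y := by
      intro x y
      rcases Classical.em (∃ i, y = bflip x i) with ⟨i, rfl⟩ | hadj
      · -- adjacent
        rcases Classical.em (f₀ x = f₀ (bflip x i)) with hf | hf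
        · rw [hf, sub_self]
          simpa using hq0 x (bflip x i)
        · -- exactly one is in S
          have hsq1 : (f₀ x - f₀ (bflip x i)) ^ 2 = 1 := by
            simp only [hf₀] at hf ⊢
            split_ifs at hf ⊢ <;> norm_num at hf <;> norm_num
          rw [hsq1, mul_one]
          have hPxy : P x (bflip x i) = (1 / N) * (π (bflip x i) / (π x + π (bflip x i))) :=
            glauberP_flip π hN x i
          have hd : 0 < π x + π (bflip x i) := by linarith [hπ x, hπ (bflip x i)]
          have hqpos : q x (bflip x i)
              = (if bflip x i ∈ sph then (1 / (N:ℝ)) * π (bflip x i) else 0)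
                + (if x ∈ sph then (1 / (N:ℝ)) * π x else 0) := by
            simp only [hq]
            rw [if_pos ⟨i, rfl⟩]
          rw [hqpos]
          -- case on which is in S
          have hdist : hammingDist' (bflip x i) σstar = hammingDist' x σstar + 1
              ∨ hammingDist' (bflip x i) σstar + 1 = hammingDist' x σstar := by
            rcases eq_or_ne (x i) (σstar i) with h | h
            · exact Or.inl (hammingDist'_bflip' h)
            · exact Or.inr (hammingDist'_bflip h)
          have hxS : (x ∈ S ∧ bflip x i ∉ S) ∨ (x ∉ S ∧ bflip x i ∈ S) := by
            simp only [hf₀] at hf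
            by_cases h1 : x ∈ S <;> by_cases h2 : bflip x i ∈ S <;>
              simp [h1, h2] at hf ⊢
          rcases hxS with ⟨h1, h2⟩ | ⟨h1, h2⟩
          · -- x in S, flip out: flip is on the sphere
            have hd1 : hammingDist' x σstar < r := (Finset.mem_filter.1 h1).2
            have hd2 : ¬ hammingDist' (bflip x i) σstar < r := by
              intro hcon
              exact h2 (Finset.mem_filter.2 ⟨Finset.mem_univ _, hcon⟩)
            have hsphmem : bflip x i ∈ sph := by
              refine Finset.mem_filter.2 ⟨Finset.mem_univ _, ?_⟩
              omega
            rw [if_pos hsphmem]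
            have hbound : π x * P x (bflip x i) ≤ (1 / N) * π (bflip x i) := by
              rw [hPxy]
              rw [show π x * ((1 / (N:ℝ)) * (π (bflip x i) / (π x + π (bflip x i))))
                = (1 / N) * (π x * π (bflip x i) / (π x + π (bflip x i))) by ring]
              have : π x * π (bflip x i) / (π x + π (bflip x i)) ≤ π (bflip x i) := by
                rw [div_le_iff₀ hd]
                nlinarith [hπ x, hπ (bflip x i)]
              have h4 : (0:ℝ) ≤ 1 / N := by positivity
              exact mul_le_mul_of_nonneg_left this h4
            have : (0:ℝ) ≤ if x ∈ sph then (1 / (N:ℝ)) * π x else 0 := by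
              split_ifs with h
              · exact mul_nonneg (by positivity) (hπ _).le
              · exact le_refl 0
            linarith
          · -- x out of S, flip in S: x on the sphere
            have hd1 : ¬ hammingDist' x σstar < r := by
              intro hcon
              exact h1 (Finset.mem_filter.2 ⟨Finset.mem_univ _, hcon⟩)
            have hd2 : hammingDist' (bflip x i) σstar < r := (Finset.mem_filter.1 h2).2
            have hsphmem : x ∈ sph := by
              refine Finset.mem_filter.2 ⟨Finset.mem_univ _, ?_⟩
              omega
            rw [if_pos hsphmem]
            have hbound : π x * P x (bflip x i) ≤ (1 / N) * π x := by
              rw [hPxy]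
              rw [show π x * ((1 / (N:ℝ)) * (π (bflip x i) / (π x + π (bflip x i))))
                = (1 / N) * (π x * π (bflip x i) / (π x + π (bflip x i))) by ring]
              have : π x * π (bflip x i) / (π x + π (bflip x i)) ≤ π x := by
                rw [div_le_iff₀ hd]
                nlinarith [hπ x, hπ (bflip x i)]
              have h4 : (0:ℝ) ≤ 1 / N := by positivity
              exact mul_le_mul_of_nonneg_left this h4
            have : (0:ℝ) ≤ if bflip x i ∈ sph then (1 / (N:ℝ)) * π (bflip x i) else 0 := by
              split_ifs with h
              · exact mul_nonneg (by positivity) (hπ _).le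
              · exact le_refl 0
            linarith
      · -- not adjacent
        have hq0' : q x y = 0 := if_neg hadj
        rw [hq0']
        rcases eq_or_ne x y with rfl | hne
        · simp
        · have hP0' : P x y = 0 := glauberP_not_flip π x y hne hadj
          rw [hP0', mul_zero, zero_mul]
    -- sum the q bound
    have hqsum : ∑ x, ∑ y, q x y ≤ 2 * B := by
      have hsplit : ∀ x y, q x y
          = (if (∃ i, y = bflip x i) ∧ y ∈ sph then (1 / (N:ℝ)) * π y else 0)
            + (if (∃ i, y = bflip x i) ∧ x ∈ sph then (1 / (N:ℝ)) * π x else 0) := by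
        intro x y
        simp only [hq]
        rcases Classical.em (∃ i, y = bflip x i) with h | h
        · rw [if_pos h]
          by_cases h1 : y ∈ sph <;> by_cases h2 : x ∈ sph <;> simp [h, h1, h2]
        · rw [if_neg h]
          simp [h]
      simp_rw [hsplit, Finset.sum_add_distrib]
      have hcard : ∀ y : Fin N → Bool,
          (Finset.univ.filter (fun x => ∃ i, x = bflip y i)).card = N := by
        intro y
        have : Finset.univ.filter (fun x => ∃ i, x = bflip y i)
            = Finset.univ.image (bflip y) := by
          ext x
          simp only [Finset.mem_filter, Finset.mem_image, Finset.mem_univ, true_and]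
          constructor
          · rintro ⟨i, rfl⟩; exact ⟨i, rfl⟩
          · rintro ⟨i, rfl⟩; exact ⟨i, rfl⟩
        rw [this, Finset.card_image_of_injective _ (bflip_inj y)]
        simp
      have hA1 : ∑ x, ∑ y, (if (∃ i, y = bflip x i) ∧ y ∈ sph
          then (1 / (N:ℝ)) * π y else 0) ≤ B := by
        rw [Finset.sum_comm]
        calc ∑ y, ∑ x, (if (∃ i, y = bflip x i) ∧ y ∈ sph then (1 / (N:ℝ)) * π y else 0)
            ≤ ∑ y, (if y ∈ sph then π y else 0) := by
              refine Finset.sum_le_sum fun y _ => ?_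
              rcases Classical.em (y ∈ sph) with hy | hy
              · refine le_of_eq ?_
                calc ∑ x, (if (∃ i, y = bflip x i) ∧ y ∈ sph then (1 / (N:ℝ)) * π y else 0)
                    = ∑ x, (if (∃ i, x = bflip y i) then (1 / (N:ℝ)) * π y else 0) := by
                      refine Finset.sum_congr rfl fun x _ => ?_
                      congr 1
                      rw [eq_iff_iff]
                      constructor
                      · rintro ⟨h1, -⟩; exact (bflip_adj_symm x y).1 h1
                      · intro h1; exact ⟨(bflip_adj_symm x y).2 h1, hy⟩
                  _ = ((Finset.univ.filter (fun x => ∃ i, x = bflip y i)).card : ℝ)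
                      * ((1 / (N:ℝ)) * π y) := by
                      rw [Finset.sum_ite, Finset.sum_const, Finset.sum_const_zero, add_zero,
                        nsmul_eq_mul]
                  _ = π y := by
                      rw [hcard y]
                      field_simp
                  _ = (if y ∈ sph then π y else 0) := by rw [if_pos hy]
              · simp [hy]
            _ = B := by
              simp only [Finset.sum_ite_mem, Finset.univ_inter, hB]
      have hA2 : ∑ x, ∑ y, (if (∃ i, y = bflip x i) ∧ x ∈ sph
          then (1 / (N:ℝ)) * π x else 0) ≤ B := by
        calc ∑ x, ∑ y, (if (∃ i, y = bflip x i) ∧ x ∈ sph then (1 / (N:ℝ)) * π x else 0)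
            ≤ ∑ x, (if x ∈ sph then π x else 0) := by
              refine Finset.sum_le_sum fun x _ => ?_
              rcases Classical.em (x ∈ sph) with hx | hx
              · refine le_of_eq ?_
                calc ∑ y, (if (∃ i, y = bflip x i) ∧ x ∈ sph then (1 / (N:ℝ)) * π x else 0)
                    = ∑ y, (if (∃ i, y = bflip x i) then (1 / (N:ℝ)) * π x else 0) := by
                      refine Finset.sum_congr rfl fun y _ => ?_
                      congr 1
                      rw [eq_iff_iff]
                      constructor
                      · rintro ⟨h1, -⟩; exact h1
                      · intro h1; exact ⟨h1, hx⟩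
                  _ = ((Finset.univ.filter (fun y => ∃ i, y = bflip x i)).card : ℝ)
                      * ((1 / (N:ℝ)) * π x) := by
                      rw [Finset.sum_ite, Finset.sum_const, Finset.sum_const_zero, add_zero,
                        nsmul_eq_mul]
                  _ = π x := by
                      have : (Finset.univ.filter (fun y => ∃ i, y = bflip x i)).card = N := by
                        have h5 : Finset.univ.filter (fun y => ∃ i, y = bflip x i)
                            = Finset.univ.image (bflip x) := by
                          ext y
                          simp only [Finset.mem_filter, Finset.mem_image, Finset.mem_univ,
                            true_and]
                          constructor
                          · rintro ⟨i, rfl⟩; exact ⟨i, rfl⟩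
                          · rintro ⟨i, rfl⟩; exact ⟨i, rfl⟩
                        rw [h5, Finset.card_image_of_injective _ (bflip_inj x)]
                        simp
                      rw [this]
                      field_simp
                  _ = (if x ∈ sph then π x else 0) := by rw [if_pos hx]
              · simp [hx]
            _ = B := by
              simp only [Finset.sum_ite_mem, Finset.univ_inter, hB]
      linarith
    unfold dirichletForm
    have hstep : ∑ x, ∑ y, π x * P x y * (f₀ x - f₀ y) ^ 2 ≤ ∑ x, ∑ y, q x y :=
      Finset.sum_le_sum fun x _ => Finset.sum_le_sum fun y _ => hboundT x y
    linarith
  -- bound B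
  have hBbound : B ≤ Real.exp (-(c * N)) * pS := by
    have hZ : (0:ℝ) < ∑ τ : Fin N → Bool, Real.exp (β * H τ) :=
      Finset.sum_pos (fun τ _ => Real.exp_pos _) ⟨σstar, Finset.mem_univ _⟩
    have hsphpt : ∀ z ∈ sph, π z ≤ Real.exp (-(β * Δ)) * π σstar := by
      intro z hz
      have hd : hammingDist' z σstar = r := (Finset.mem_filter.1 hz).2
      have hHz : H σstar - H z ≥ Δ := hsphere z hd
      have h1 : β * H z ≤ β * H σstar - β * Δ := by nlinarith
      simp only [hπdef, gibbs]
      rw [div_le_iff₀ hZ]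
      rw [show Real.exp (-(β * Δ)) * (Real.exp (β * H σstar) / ∑ τ, Real.exp (β * H τ))
          * ∑ τ, Real.exp (β * H τ)
        = Real.exp (-(β * Δ)) * Real.exp (β * H σstar)
          * ((∑ τ, Real.exp (β * H τ))⁻¹ * ∑ τ, Real.exp (β * H τ)) by ring]
      rw [inv_mul_cancel₀ (ne_of_gt hZ), mul_one, ← Real.exp_add]
      exact Real.exp_le_exp.2 (by linarith)
    have hcard : (sph.card : ℝ) ≤ 2 ^ N := by
      have h1 : sph.card ≤ Fintype.card (Fin N → Bool) := Finset.card_le_univ sph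
      have h2 : Fintype.card (Fin N → Bool) = 2 ^ N := by simp
      exact_mod_cast h1.trans_eq h2
    have hB1 : B ≤ (sph.card : ℝ) * (Real.exp (-(β * Δ)) * π σstar) := by
      rw [hB]
      calc ∑ z ∈ sph, π z ≤ ∑ _z ∈ sph, Real.exp (-(β * Δ)) * π σstar :=
            Finset.sum_le_sum hsphpt
        _ = (sph.card : ℝ) * (Real.exp (-(β * Δ)) * π σstar) := by
            rw [Finset.sum_const, nsmul_eq_mul]
    have hexpbound : (2:ℝ) ^ N * Real.exp (-(β * Δ)) ≤ Real.exp (-(c * N)) := by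
      have h1 : Real.exp (-(β * Δ)) ≤ Real.exp (-((Real.log 2 + c) * N)) :=
        Real.exp_le_exp.2 (by linarith)
      have h2 : (2:ℝ) ^ N = Real.exp ((N:ℝ) * Real.log 2) := by
        rw [Real.exp_nat_mul, Real.exp_log (by norm_num : (0:ℝ) < 2)]
      calc (2:ℝ) ^ N * Real.exp (-(β * Δ))
          ≤ (2:ℝ) ^ N * Real.exp (-((Real.log 2 + c) * N)) := by
            apply mul_le_mul_of_nonneg_left h1
            positivity
        _ = Real.exp (-(c * N)) := by
            rw [h2, ← Real.exp_add]
            congr 1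
            ring
    have hπstar : π σstar ≤ pS :=
      Finset.single_le_sum (fun x _ => (hπ x).le) hσstarS
    have hexp_nonneg : (0:ℝ) ≤ Real.exp (-(β * Δ)) := (Real.exp_pos _).le
    calc B ≤ (sph.card : ℝ) * (Real.exp (-(β * Δ)) * π σstar) := hB1
      _ ≤ 2 ^ N * (Real.exp (-(β * Δ)) * π σstar) :=
          mul_le_mul_of_nonneg_right hcard
            (mul_nonneg (Real.exp_pos _).le (hπ σstar).le)
      _ = (2 ^ N * Real.exp (-(β * Δ))) * π σstar := by ring
      _ ≤ Real.exp (-(c * N)) * π σstar :=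
          mul_le_mul_of_nonneg_right hexpbound (hπ σstar).le
      _ ≤ Real.exp (-(c * N)) * pS :=
          mul_le_mul_of_nonneg_left hπstar (Real.exp_pos _).le
  -- Dirichlet form of g₀ equals that of f₀
  have hDg : dirichletForm π P g₀ = dirichletForm π P f₀ := by
    unfold dirichletForm
    congr 1
    refine Finset.sum_congr rfl fun x _ => Finset.sum_congr rfl fun y _ => ?_
    have : g₀ x - g₀ y = f₀ x - f₀ y := by simp only [hg₀]; ring
    rw [this]
  set ε : ℝ := 2 * Real.exp (-c * N) with hε
  have hεpos : 0 < ε := by positivity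
  have hεeq : Real.exp (-(c * N)) = ε / 2 := by
    rw [hε, neg_mul]
    ring
  have hdir : dirichletForm π P g₀ ≤ ε * ∑ x, π x * g₀ x ^ 2 := by
    rw [hDg, hvarg]
    calc dirichletForm π P f₀ ≤ B := hDf
      _ ≤ Real.exp (-(c * N)) * pS := hBbound
      _ = (ε / 2) * pS := by rw [hεeq]
      _ ≤ ε * (pS * (1 - pS)) := by
        nlinarith [mul_nonneg (mul_nonneg hεpos.le hpS_pos.le)
          (by linarith : (0:ℝ) ≤ 1/2 - pS)]
  constructor
  · -- spectral gap bound
    have hvarf : varPi π f₀ = pS * (1 - pS) := by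
      unfold varPi
      rw [hmeanf]
      calc ∑ x, π x * (f₀ x - pS) ^ 2 = ∑ x, π x * g₀ x ^ 2 := by
            refine Finset.sum_congr rfl fun x _ => ?_
            simp only [hg₀]
      _ = pS * (1 - pS) := hvarg
    have hvarne : varPi π f₀ ≠ 0 := by
      rw [hvarf]; nlinarith
    have hmem : dirichletForm π P f₀ / varPi π f₀
        ∈ {r : ℝ | ∃ f, varPi π f ≠ 0 ∧ r = dirichletForm π P f / varPi π f} :=
      ⟨f₀, hvarne, rfl⟩
    have hbdd : BddBelow {r : ℝ | ∃ f : (Fin N → Bool) → ℝ,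
        varPi π f ≠ 0 ∧ r = dirichletForm π P f / varPi π f} := by
      refine ⟨0, fun x hx => ?_⟩
      obtain ⟨f, hfne, rfl⟩ := hx
      have hDnn : 0 ≤ dirichletForm π P f := by
        unfold dirichletForm
        have h1 : ∀ x ∈ Finset.univ, (0:ℝ) ≤ ∑ y, π x * P x y * (f x - f y) ^ 2 :=
          fun x _ => Finset.sum_nonneg fun y _ =>
            mul_nonneg (mul_nonneg (hπ x).le (hP0 x y)) (sq_nonneg _)
        have := Finset.sum_nonneg h1
        linarith
      have hVnn : 0 ≤ varPi π f := Finset.sum_nonneg fun x _ =>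
        mul_nonneg (hπ x).le (sq_nonneg _)
      exact div_nonneg hDnn hVnn
    have hratio : dirichletForm π P f₀ / varPi π f₀ ≤ ε := by
      rw [hvarf, div_le_iff₀ (by nlinarith : (0:ℝ) < pS * (1 - pS))]
      calc dirichletForm π P f₀ ≤ B := hDf
        _ ≤ Real.exp (-(c * N)) * pS := hBbound
        _ = (ε / 2) * pS := by rw [hεeq]
        _ ≤ ε * (pS * (1 - pS)) := by
          nlinarith [mul_nonneg (mul_nonneg hεpos.le hpS_pos.le)
            (by linarith : (0:ℝ) ≤ 1/2 - pS)]
    exact le_trans (csInf_le hbdd hmem) hratio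
  · -- mixing time bound
    rcases le_or_gt (Real.exp (c * N) / 2 - 1) 0 with htriv | hnontriv
    · calc (Real.exp (c * N) / 2 - 1) * Real.log 2 ≤ 0 :=
            mul_nonpos_of_nonpos_of_nonneg htriv (Real.log_nonneg (by norm_num))
        _ ≤ _ := Nat.cast_nonneg _
    · have hε1 : ε < 1 := by
        rw [hε]
        have h1 : Real.exp (-c * N) = (Real.exp (c * N))⁻¹ := by
          rw [← Real.exp_neg]
          congr 1
          ring
        rw [h1]
        rw [mul_inv_lt_iff₀ (Real.exp_pos _)]
        linarith
      have hTne : {t : ℕ | ∀ x, (1/2) * ∑ y, |kernelPow P t x y - π y| ≤ 1/4}.Nonempty :=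
        mixing_set_nonempty π P hP0 hrow hrev (fun x => (hπ x).le) hπ1 N
          (fun x y => kernelPow_glauber_pos π hπ hN N x y (hammingDist'_le x y))
      have hmem := Nat.sInf_mem hTne
      have hmix := mix_lb π P hπ hπ1 hP0 hrow hrev hconn ε hεpos hε1 g₀ hmean hvarpos hdir
        (mixingTime π P) hmem
      have heq : (Real.exp (c * N) / 2 - 1) * Real.log 2 = Real.log 2 * ((1 - ε) / ε) := by
        rw [hε]
        have h1 : Real.exp (-c * N) = (Real.exp (c * N))⁻¹ := by
          rw [← Real.exp_neg]; congr 1; ring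
        rw [h1]
        have h2 : Real.exp (c * N) ≠ 0 := ne_of_gt (Real.exp_pos _)
        field_simp
      rw [heq]
      exact hmix

end Main

theorem stmt10 {N : ℕ} (hN : 1 ≤ N) (β c : ℝ) (hβ : 0 < β) (hc : 0 < c)
    (H : (Fin N → Bool) → ℝ) (heven : ∀ σ, H (fun i => !σ i) = H σ)
    (σstar : Fin N → Bool) (ρ Δ : ℝ) (hρ : 0 < ρ) (hρ' : ρ < 1/2) (hΔ : 0 < Δ)
    (hsphere : ∀ σ : Fin N → Bool,
      hammingDist' σ σstar = Nat.floor (ρ * N / 2) → H σstar - H σ ≥ Δ)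
    (hβΔ : β * Δ ≥ (Real.log 2 + c) * N) :
    spectralGap (gibbs β H) (glauberP (gibbs β H)) ≤ 2 * Real.exp (-c * N) ∧
    (Real.exp (c * N) / 2 - 1) * Real.log 2
      ≤ (mixingTime (gibbs β H) (glauberP (gibbs β H)) : ℝ) :=
  stmt10' hN β c hβ hc H heven σstar ρ Δ hρ hρ' hΔ hsphere hβΔ
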